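/- Let w : {(i,j) : 1 ≤ i < j ≤ n} → ℝ≥0 be 'total potential errors' of the form w(i,j) = c·D̄·(t_j - t_i) where t_1 < ⋯ < t_n, c ≥ 0, D̄ ≥ 0. Given non-expanding maps M_{i,j} : X_i → X_j between metric spaces with d(M_{j,k}(M_{i,j}(x)), M_{i,k}(x)) ≤ c·(t_k - t_j)·D̄ for all i < j < k and x in the unit ball, then for any two refinements T₁, T₂ of a subdivision S = {s_1 < ⋯ < s_m} of [t_1, t_n], the compositions along T₁ and T₂ applied to a unit-ball element differ at points of S by at most 2·Σ_{i=1}^{m-1} c·D̄·(s_{i+1} - s_i) = 2·c·D̄·(s_m - s_1). -/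
import Mathlib


/-- Composite of the maps `M` along the increasing enumeration `r` of a subdivision:
`chainAlong M r k = M (r (k-1)) (r k) ∘ ⋯ ∘ M (r 0) (r 1) : X (r 0) → X (r k)`. -/
def chainAlong {X : ℕ → Type*} (M : ∀ i j : ℕ, X i → X j) (r : ℕ → ℕ) :
    ∀ k : ℕ, X (r 0) → X (r k)
  | 0 => id
  | (k + 1) => M (r k) (r (k + 1)) ∘ chainAlong M r k

lemma dist_cast_left {X : ℕ → Type*} [∀ i, MetricSpace (X i)] {i j : ℕ} (h : i = j)
    (a : X i) (z : X j) :
    dist (cast (congrArg X h) a) z = dist a (cast (congrArg X h.symm) z) := by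
  subst h; rfl

lemma cast_M {X : ℕ → Type*} (M : ∀ i j : ℕ, X i → X j) {i j i' j' : ℕ}
    (hi : i = i') (hj : j = j') (x : X i) :
    cast (congrArg X hj) (M i j x) = M i' j' (cast (congrArg X hi) x) := by
  subst hi; subst hj; rfl

lemma dist_cast_b {X : ℕ → Type*} [∀ i, MetricSpace (X i)] (b : ∀ i, X i) {i i' : ℕ}
    (h : i = i') (a : X i) :
    dist (cast (congrArg X h) a) (b i') = dist a (b i) := by
  subst h; rfl

/-- Key estimate: the chain along `r` deviates from the direct map by a telescoping sum. -/
lemma chain_close {X : ℕ → Type*} [∀ i, MetricSpace (X i)]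
    (M : ∀ i j : ℕ, X i → X j) (t : ℕ → ℝ) (c Dbar : ℝ) (hc : 0 ≤ c) (hD : 0 ≤ Dbar)
    (ht : StrictMono t) (b : ∀ i, X i)
    (hlip : ∀ i j : ℕ, i < j → LipschitzWith 1 (M i j))
    (hdisc : ∀ i j k : ℕ, i < j → j < k → ∀ x : X i, dist x (b i) ≤ 1 →
      dist (M j k (M i j x)) (M i k x) ≤ c * (t k - t j) * Dbar)
    (r : ℕ → ℕ) (hr : StrictMono r) (n : ℕ)
    (x : X (r 0)) (hx : dist x (b (r 0)) ≤ 1) :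
    dist (chainAlong M r (n + 1) x) (M (r 0) (r (n + 1)) x)
      ≤ c * Dbar * (t (r (n + 1)) - t (r 0)) := by
  induction n with
  | zero =>
      simp [chainAlong]
      have := (ht (hr (Nat.zero_lt_one))).le
      nlinarith [mul_nonneg hc hD]
  | succ n ih =>
      have h01 : r 0 < r (n + 1) := hr (Nat.succ_pos n)
      have h12 : r (n + 1) < r (n + 2) := hr (Nat.lt_succ_self (n + 1))
      have step : dist (chainAlong M r (n + 2) x) (M (r 0) (r (n + 2)) x)
          ≤ dist (M (r (n+1)) (r (n+2)) (chainAlong M r (n + 1) x))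
              (M (r (n+1)) (r (n+2)) (M (r 0) (r (n+1)) x))
            + dist (M (r (n+1)) (r (n+2)) (M (r 0) (r (n+1)) x)) (M (r 0) (r (n+2)) x) :=
        dist_triangle _ _ _
      have hl : dist (M (r (n+1)) (r (n+2)) (chainAlong M r (n + 1) x))
            (M (r (n+1)) (r (n+2)) (M (r 0) (r (n+1)) x))
          ≤ dist (chainAlong M r (n + 1) x) (M (r 0) (r (n+1)) x) := by
        simpa using (hlip _ _ h12).dist_le_mul (chainAlong M r (n + 1) x) (M (r 0) (r (n+1)) x)
      have hd := hdisc (r 0) (r (n+1)) (r (n+2)) h01 h12 x hx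
      have hmono : t (r (n+1)) - t (r 0) ≥ 0 := by
        have := (ht h01).le; linarith
      calc dist (chainAlong M r (n + 2) x) (M (r 0) (r (n + 2)) x)
          ≤ _ + _ := step
        _ ≤ c * Dbar * (t (r (n + 1)) - t (r 0)) + c * (t (r (n+2)) - t (r (n+1))) * Dbar :=
            add_le_add (hl.trans ih) hd
        _ ≤ c * Dbar * (t (r (n + 2)) - t (r 0)) := by ring_nf; nlinarith

/-- given non-expanding maps `M i j` with three-point discrepancy bounded by
`c·(t k - t j)·D̄` on the unit ball, the compositions along two refinements `r₁`, `r₂` of a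
subdivision `s 0 < ⋯ < s m` (with common endpoints `s 0` and `s m`) applied to a unit-ball
element differ by at most `2·c·D̄·(t (s m) - t (s 0))`. -/
theorem stmt18 {X : ℕ → Type*} [∀ i, MetricSpace (X i)]
    (M : ∀ i j : ℕ, X i → X j) (t : ℕ → ℝ) (c Dbar : ℝ) (hc : 0 ≤ c) (hD : 0 ≤ Dbar)
    (ht : StrictMono t) (b : ∀ i, X i)
    (hlip : ∀ i j : ℕ, i < j → LipschitzWith 1 (M i j))
    (hdisc : ∀ i j k : ℕ, i < j → j < k → ∀ x : X i, dist x (b i) ≤ 1 →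
      dist (M j k (M i j x)) (M i k x) ≤ c * (t k - t j) * Dbar)
    -- the subdivision `S`, given by indices `s 0 < s 1 < ⋯ < s m`
    (s : ℕ → ℕ) (m : ℕ) (hm : 1 ≤ m) (hs : StrictMono s)
    -- two refinements `r₁` (with `n₁` steps) and `r₂` (with `n₂` steps) of `S`
    (r₁ r₂ : ℕ → ℕ) (n₁ n₂ : ℕ) (hr₁ : StrictMono r₁) (hr₂ : StrictMono r₂)
    (h₁0 : r₁ 0 = s 0) (h₂0 : r₂ 0 = s 0)
    (h₁e : r₁ n₁ = s m) (h₂e : r₂ n₂ = s m)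
    (href₁ : ∀ j ≤ m, ∃ k ≤ n₁, r₁ k = s j)
    (href₂ : ∀ j ≤ m, ∃ k ≤ n₂, r₂ k = s j) :
    ∀ x : X (s 0), dist x (b (s 0)) ≤ 1 →
      dist (cast (congrArg X h₁e) (chainAlong M r₁ n₁ (cast (congrArg X h₁0.symm) x)))
           (cast (congrArg X h₂e) (chainAlong M r₂ n₂ (cast (congrArg X h₂0.symm) x)))
        ≤ 2 * c * Dbar * (t (s m) - t (s 0)) := by
  intro x hx
  have hsm : s 0 < s m := hs hm
  -- each refinement has at least one step
  have hn : ∀ (r : ℕ → ℕ) (n : ℕ), r 0 = s 0 → r n = s m → 1 ≤ n := by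
    intro r n h0 he
    rcases Nat.eq_zero_or_pos n with h | h
    · subst h; rw [h0] at he; omega
    · exact h
  have key : ∀ (r : ℕ → ℕ) (n : ℕ) (hr : StrictMono r) (h0 : r 0 = s 0) (he : r n = s m),
      dist (cast (congrArg X he) (chainAlong M r n (cast (congrArg X h0.symm) x)))
        (M (s 0) (s m) x) ≤ c * Dbar * (t (s m) - t (s 0)) := by
    intro r n hr h0 he
    obtain ⟨n', rfl⟩ : ∃ n', n = n' + 1 := ⟨n - 1, by have := hn r n h0 he; omega⟩
    rw [dist_cast_left he, cast_M M h0.symm he.symm x]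
    have hx' : dist (cast (congrArg X h0.symm) x) (b (r 0)) ≤ 1 := by
      rw [dist_cast_b b h0.symm x]; exact hx
    have := chain_close M t c Dbar hc hD ht b hlip hdisc r hr n'
      (cast (congrArg X h0.symm) x) hx'
    calc dist (chainAlong M r (n' + 1) (cast (congrArg X h0.symm) x))
          (M (r 0) (r (n' + 1)) (cast (congrArg X h0.symm) x))
        ≤ c * Dbar * (t (r (n' + 1)) - t (r 0)) := this
      _ = c * Dbar * (t (s m) - t (s 0)) := by rw [he, h0]
  have k₁ := key r₁ n₁ hr₁ h₁0 h₁e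
  have k₂ := key r₂ n₂ hr₂ h₂0 h₂e
  calc dist _ _ ≤ _ + dist (M (s 0) (s m) x)
        (cast (congrArg X h₂e) (chainAlong M r₂ n₂ (cast (congrArg X h₂0.symm) x))) :=
      dist_triangle _ _ _
    _ ≤ c * Dbar * (t (s m) - t (s 0)) + c * Dbar * (t (s m) - t (s 0)) := by
        rw [dist_comm (M (s 0) (s m) x)]; exact add_le_add k₁ k₂
    _ = 2 * c * Dbar * (t (s m) - t (s 0)) := by ring
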